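/- Finite-strategy open determinacy for player II on Cantor space (content of the equivalence FT ↔ Σ⁰₁-*Det^{II}_C in Theorem 9.5; classically valid): for every A : List Bool → Bool, if for every σ : List Bool → Bool there exists δ : ℕ → Bool with δ (2*n) = σ (δ↾(2*n)) for all n and with B-hit ∃ k, A (δ↾k) = true, then there exist m and τ : List Bool → Bool such that every δ : ℕ → Bool with δ (2*n+1) = τ (δ↾(2*n+1)) for all n satisfies ∃ k ≤ m, A (δ↾k) = true. -/
import Mathlib

/-- The first `n` values of `γ` as a list. -/
def seg (γ : ℕ → Bool) (n : ℕ) : List Bool := List.ofFn fun i : Fin n => γ i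

lemma seg_succ (δ : ℕ → Bool) (n : ℕ) : seg δ (n+1) = seg δ n ++ [δ n] := by
  rw [seg, List.ofFn_succ']
  simp [seg, List.concat_eq_append]

lemma seg_length (δ : ℕ → Bool) (n : ℕ) : (seg δ n).length = n := by
  simp [seg]

/-- `G A n p`: position `p` is winning for player II within `n` more moves. -/
def G (A : List Bool → Bool) : ℕ → List Bool → Prop
  | 0, p => A p = true
  | n+1, p => G A n p ∨
      (if p.length % 2 = 0 then G A n (p ++ [false]) ∧ G A n (p ++ [true])
       else ∃ b, G A n (p ++ [b]))

lemma G_succ_of (A : List Bool → Bool) {n p} (hg : G A n p) : G A (n+1) p :=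
  Or.inl hg

lemma G_mono (A : List Bool → Bool) {m n p} (h : m ≤ n) (hg : G A m p) : G A n p := by
  induction n with
  | zero => simpa [Nat.le_zero.mp h] using hg
  | succ n ih =>
    rcases Nat.lt_or_ge m (n+1) with h' | h'
    · exact G_succ_of A (ih (Nat.lt_succ_iff.mp h'))
    · have : m = n + 1 := le_antisymm h h'
      simpa [this] using hg

/-- Finite-strategy open determinacy for player II on Cantor space
(content of the equivalence FT ↔ Σ⁰₁-*Det^{II}_C in Theorem 9.5). -/
theorem finite_strategy_open_determinacy (A : List Bool → Bool)
    (h : ∀ σ : List Bool → Bool, ∃ δ : ℕ → Bool,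
      (∀ n, δ (2 * n) = σ (seg δ (2 * n))) ∧ ∃ k, A (seg δ k) = true) :
    ∃ (m : ℕ) (τ : List Bool → Bool), ∀ δ : ℕ → Bool,
      (∀ n, δ (2 * n + 1) = τ (seg δ (2 * n + 1))) →
      ∃ k ≤ m, A (seg δ k) = true := by
  classical
  by_cases hG : ∃ N, G A N []
  · -- player II wins: extract a strategy from G
    obtain ⟨N, hN⟩ := hG
    set τ : List Bool → Bool := fun p =>
      if (∃ n, G A n (p ++ [true]) ∧ ¬ G A n (p ++ [false])) then true else false with hτ
    have tau_good : ∀ n p, (∃ b, G A n (p ++ [b])) → G A n (p ++ [τ p]) := by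
      intro n p hex
      by_cases h0 : G A n (p ++ [false])
      · by_cases hc : ∃ m, G A m (p ++ [true]) ∧ ¬ G A m (p ++ [false])
        · obtain ⟨m, hm1, hm0⟩ := hc
          have hmn : m ≤ n := by
            by_contra hmn
            exact hm0 (G_mono A (le_of_not_ge hmn) h0)
          have : τ p = true := by
            simp only [hτ]; rw [if_pos ⟨m, hm1, hm0⟩]
          rw [this]
          exact G_mono A hmn hm1
        · have : τ p = false := by simp only [hτ]; rw [if_neg hc]
          rw [this]; exact h0
      · obtain ⟨b, hb⟩ := hex
        have hb1 : G A n (p ++ [true]) := by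
          cases b with
          | false => exact absurd hb h0
          | true => exact hb
        have : τ p = true := by
          simp only [hτ]; rw [if_pos ⟨n, hb1, h0⟩]
        rw [this]; exact hb1
    refine ⟨N, τ, fun δ hδ => ?_⟩
    have main : ∀ n p, G A n p → seg δ p.length = p →
        ∃ k ≤ p.length + n, A (seg δ k) = true := by
      intro n
      induction n with
      | zero => intro p hg hseg; exact ⟨p.length, by omega, by rwa [hseg]⟩
      | succ n ih =>
        intro p hg hseg
        rcases hg with hg | hg
        · obtain ⟨k, hk, hA⟩ := ih p hg hseg
          exact ⟨k, by omega, hA⟩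
        · set l := p.length with hl
          by_cases hpar : l % 2 = 0
          · rw [if_pos hpar] at hg
            have hchild : G A n (p ++ [δ l]) := by
              cases hb : δ l with
              | false => exact hg.1
              | true => exact hg.2
            have hseg' : seg δ (p ++ [δ l]).length = p ++ [δ l] := by
              rw [List.length_append, ← hl]
              simpa [seg_succ, hseg] using rfl
            obtain ⟨k, hk, hA⟩ := ih (p ++ [δ l]) hchild hseg'
            refine ⟨k, ?_, hA⟩
            rw [List.length_append] at hk
            simp only [List.length_singleton] at hk
            omega
          · rw [if_neg hpar] at hg
            have hlodd : l = 2 * (l / 2) + 1 := by omega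
            have hδl : δ l = τ (seg δ l) := by
              rw [hlodd]; exact hδ (l / 2)
            rw [hseg] at hδl
            have hchild : G A n (p ++ [δ l]) := by
              rw [hδl]; exact tau_good n p hg
            have hseg' : seg δ (p ++ [δ l]).length = p ++ [δ l] := by
              rw [List.length_append, ← hl]
              simpa [seg_succ, hseg] using rfl
            obtain ⟨k, hk, hA⟩ := ih (p ++ [δ l]) hchild hseg'
            refine ⟨k, ?_, hA⟩
            rw [List.length_append] at hk
            simp only [List.length_singleton] at hk
            omega
    simpa using main N [] hN (by simp [seg])
  · -- otherwise player I has a strategy avoiding A, contradicting h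
    exfalso
    push_neg at hG
    set σ : List Bool → Bool := fun p =>
      if (∀ n, ¬ G A n (p ++ [false])) then false else true with hσ
    obtain ⟨δ, hδ, k, hk⟩ := h σ
    have bad : ∀ k, ∀ n, ¬ G A n (seg δ k) := by
      intro k
      induction k with
      | zero => simpa [seg] using hG
      | succ k ih =>
        intro n
        rw [seg_succ]
        set p := seg δ k with hp
        have hlen : p.length = k := seg_length δ k
        by_cases hpar : k % 2 = 0
        · -- I's turn: δ k = σ p
          have hkeven : k = 2 * (k / 2) := by omega
          have hδk : δ k = σ p := by
            have := hδ (k / 2); rwa [← hkeven] at this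
          by_cases h0 : ∀ m, ¬ G A m (p ++ [false])
          · have : σ p = false := by simp only [hσ]; rw [if_pos h0]
            rw [hδk, this]; exact h0 n
          · have : σ p = true := by simp only [hσ]; rw [if_neg h0]
            rw [hδk, this]
            push_neg at h0
            obtain ⟨m, hm⟩ := h0
            intro h1
            have := ih (max m n + 1)
            apply this
            refine Or.inr ?_
            rw [if_pos (by rw [hlen]; exact hpar)]
            exact ⟨G_mono A (le_max_left m n) hm, G_mono A (le_max_right m n) h1⟩
        · -- II's turn: no constraint needed, both children bad
          intro h1
          apply ih (n + 1)
          refine Or.inr ?_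
          rw [if_neg (by rw [hlen]; exact hpar)]
          exact ⟨δ k, h1⟩
    exact bad k 0 hk
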